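/- Suppose (u, E) ∈ H¹_per × ℝ satisfies a_R(u,v) = E ∫₀¹ u v for all v ∈ H¹_per. Then for every k ∈ ℤ the Fourier coefficient û(k) = ∫₀¹ u(x) e^{−2πikx} dx satisfies (4π²k² − E) · û(k) = z1 u(0) + z2 u(R) e^{−2πikR}. -/

import Mathlib

open MeasureTheory intervalIntegral Real

noncomputable section

/-- `v` belongs to `H¹_per` with (weak) derivative `v'`. -/
def IsH1per (v v' : ℝ → ℝ) : Prop :=
  Continuous v ∧ (∀ x, v (x + 1) = v x) ∧ (∀ x, v' (x + 1) = v' x) ∧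
  (∀ a b : ℝ, IntervalIntegrable v' volume a b) ∧
  IntervalIntegrable (fun t => (v' t) ^ 2) volume 0 1 ∧
  (∀ x : ℝ, v x = v 0 + ∫ t in (0:ℝ)..x, v' t)

/-- The bilinear form `a_R`. -/
def aR (z1 z2 R : ℝ) (v v' w w' : ℝ → ℝ) : ℝ :=
  (∫ x in (0:ℝ)..1, v' x * w' x) - z1 * v 0 * w 0 - z2 * v R * w R

/-- Fourier coefficient `ŵ(k) = ∫₀¹ w(x) e^{−2πikx} dx`. -/
def fc (w : ℝ → ℝ) (k : ℤ) : ℂ :=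
  ∫ x in (0:ℝ)..1, (w x : ℂ) * Complex.exp (-(2 * (π:ℂ) * Complex.I * (k:ℂ) * (x:ℂ)))

/-- Fubini for the triangle `{0 ≤ x ≤ t ≤ 1}`. -/
lemma swap_tri (f g : ℝ → ℝ) (hf : IntegrableOn f (Set.Ioc 0 1))
    (hg : IntegrableOn g (Set.Ioc 0 1)) :
    ∫ t in Set.Ioc (0:ℝ) 1, f t * ∫ x in Set.Ioc (0:ℝ) t, g x
      = ∫ x in Set.Ioc (0:ℝ) 1, (∫ t in Set.Ioc x (1:ℝ), f t) * g x := by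
  set μ := volume.restrict (Set.Ioc (0:ℝ) 1) with hμ
  set S : Set (ℝ × ℝ) := {p : ℝ × ℝ | p.2 ≤ p.1} with hS
  have hSm : MeasurableSet S := measurableSet_le measurable_snd measurable_fst
  have hFint : Integrable (S.indicator (fun p : ℝ × ℝ => f p.1 * g p.2)) (μ.prod μ) :=
    (hf.mul_prod hg).indicator hSm
  have hswap := MeasureTheory.integral_integral_swap (f := fun t x =>
    S.indicator (fun p : ℝ × ℝ => f p.1 * g p.2) (t, x)) hFint
  calc ∫ t in Set.Ioc (0:ℝ) 1, f t * ∫ x in Set.Ioc (0:ℝ) t, g x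
      = ∫ t, (∫ x, S.indicator (fun p : ℝ × ℝ => f p.1 * g p.2) (t, x) ∂μ) ∂μ := by
        apply setIntegral_congr_fun measurableSet_Ioc
        intro t ht
        dsimp only
        have : (fun x => S.indicator (fun p : ℝ × ℝ => f p.1 * g p.2) (t, x))
            = (Set.Iic t).indicator (fun x => f t * g x) := by
          ext y
          simp only [Set.indicator_apply, Set.mem_setOf_eq, Set.mem_Iic]; rfl
        rw [this, MeasureTheory.integral_indicator measurableSet_Iic, hμ,
          Measure.restrict_restrict measurableSet_Iic]
        have : Set.Iic t ∩ Set.Ioc (0:ℝ) 1 = Set.Ioc 0 t := by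
          ext y; simp only [Set.mem_inter_iff, Set.mem_Iic, Set.mem_Ioc]
          constructor
          · rintro ⟨h1, h2, h3⟩; exact ⟨h2, h1⟩
          · rintro ⟨h1, h2⟩; exact ⟨h2, h1, h2.trans ht.2⟩
        rw [this, MeasureTheory.integral_const_mul]
    _ = ∫ x, (∫ t, S.indicator (fun p : ℝ × ℝ => f p.1 * g p.2) (t, x) ∂μ) ∂μ := hswap
    _ = ∫ x in Set.Ioc (0:ℝ) 1, (∫ t in Set.Ioc x (1:ℝ), f t) * g x := by
        apply setIntegral_congr_fun measurableSet_Ioc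
        intro x hx
        dsimp only
        have : (fun t => S.indicator (fun p : ℝ × ℝ => f p.1 * g p.2) (t, x))
            = (Set.Ici x).indicator (fun t => f t * g x) := by
          ext y
          simp only [Set.indicator_apply, Set.mem_setOf_eq, Set.mem_Ici]; rfl
        rw [this, MeasureTheory.integral_indicator measurableSet_Ici, hμ,
          Measure.restrict_restrict measurableSet_Ici]
        have : Set.Ici x ∩ Set.Ioc (0:ℝ) 1 = Set.Icc x 1 := by
          ext y; simp only [Set.mem_inter_iff, Set.mem_Ici, Set.mem_Ioc, Set.mem_Icc]
          constructor
          · rintro ⟨h1, h2, h3⟩; exact ⟨h1, h3⟩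
          · rintro ⟨h1, h2⟩; exact ⟨h1, hx.1.trans_le h1, h2⟩
        rw [this, MeasureTheory.integral_Icc_eq_integral_Ioc,
          MeasureTheory.integral_mul_const]

/-- Integration by parts against a `C¹` periodic test function. -/
lemma parts_per (u u' w w' : ℝ → ℝ) (hu : IsH1per u u')
    (hw : ∀ x, HasDerivAt w (w' x) x) (hw' : Continuous w') (hper : w 1 = w 0) :
    ∫ x in (0:ℝ)..1, u' x * w x = -∫ x in (0:ℝ)..1, u x * w' x := by
  obtain ⟨hucont, huper, -, hu'int, -, hrep⟩ := hu
  have hu'01 : IntervalIntegrable u' volume 0 1 := hu'int 0 1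
  have hwrep : ∀ x : ℝ, ∫ t in (0:ℝ)..x, w' t = w x - w 0 := fun x =>
    integral_eq_sub_of_hasDerivAt (fun t _ => hw t) (hw'.intervalIntegrable _ _)
  have hu'sum : ∫ t in (0:ℝ)..1, u' t = 0 := by
    have h1 := hrep 1
    have h2 : u 1 = u 0 := by simpa using huper 0
    linarith
  have hw'sum : ∫ t in (0:ℝ)..1, w' t = 0 := by rw [hwrep, hper]; ring
  have hwc : Continuous w := continuous_iff_continuousAt.mpr fun x => (hw x).continuousAt
  have int2 : IntegrableOn (fun t => u' t * (w t - w 0)) (Set.Ioc (0:ℝ) 1) :=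
    (hu'01.mul_continuousOn ((hwc.sub continuous_const).continuousOn)).1
  calc ∫ x in (0:ℝ)..1, u' x * w x
      = ∫ t in Set.Ioc (0:ℝ) 1, (u' t * w 0 + u' t * (w t - w 0)) := by
        rw [integral_of_le zero_le_one]; congr 1; ext t; ring
    _ = (∫ t in Set.Ioc (0:ℝ) 1, u' t * w 0)
        + ∫ t in Set.Ioc (0:ℝ) 1, u' t * (w t - w 0) :=
        integral_add (hu'01.1.mul_const _) int2
    _ = ∫ t in Set.Ioc (0:ℝ) 1, u' t * (w t - w 0) := by
        have : ∫ t in Set.Ioc (0:ℝ) 1, u' t * w 0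
            = (∫ t in (0:ℝ)..1, u' t) * w 0 := by
          rw [integral_of_le zero_le_one, MeasureTheory.integral_mul_const]
        rw [this, hu'sum]; ring
    _ = ∫ t in Set.Ioc (0:ℝ) 1, u' t * ∫ x in Set.Ioc (0:ℝ) t, w' x := by
        apply setIntegral_congr_fun measurableSet_Ioc
        intro t ht
        dsimp only
        rw [← integral_of_le ht.1.le, hwrep]
    _ = ∫ x in Set.Ioc (0:ℝ) 1, (∫ t in Set.Ioc x (1:ℝ), u' t) * w' x :=
        swap_tri u' w' hu'01.1 (hw'.intervalIntegrable 0 1).1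
    _ = ∫ x in Set.Ioc (0:ℝ) 1, (u 0 - u x) * w' x := by
        apply setIntegral_congr_fun measurableSet_Ioc
        intro x hx
        dsimp only
        congr 1
        rw [← integral_of_le hx.2]
        have hsplit : ∫ t in (0:ℝ)..1, u' t
            = (∫ t in (0:ℝ)..x, u' t) + ∫ t in x..(1:ℝ), u' t :=
          (integral_add_adjacent_intervals (hu'int 0 x) (hu'int x 1)).symm
        have hx0 := hrep x
        linarith
    _ = (∫ x in Set.Ioc (0:ℝ) 1, u 0 * w' x) - ∫ x in Set.Ioc (0:ℝ) 1, u x * w' x := by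
        rw [← MeasureTheory.integral_sub (g := fun x => u x * w' x) ((hw'.intervalIntegrable 0 1).1.const_mul (u 0))
          ((hucont.mul hw').intervalIntegrable 0 1).1]
        congr 1; ext x; ring
    _ = -∫ x in (0:ℝ)..1, u x * w' x := by
        have h1 : ∫ x in Set.Ioc (0:ℝ) 1, u 0 * w' x = u 0 * ∫ x in (0:ℝ)..1, w' x := by
          rw [integral_of_le zero_le_one, MeasureTheory.integral_const_mul]
        rw [h1, hw'sum, integral_of_le zero_le_one]; ring

/-- A `C¹` function with periodic data is in `H¹_per`. -/
lemma isH1per_of_deriv (w w' : ℝ → ℝ) (hd : ∀ x, HasDerivAt w (w' x) x)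
    (hw' : Continuous w') (hwper : ∀ x, w (x + 1) = w x)
    (hw'per : ∀ x, w' (x + 1) = w' x) : IsH1per w w' := by
  refine ⟨continuous_iff_continuousAt.mpr fun x => (hd x).continuousAt, hwper, hw'per,
    fun a b => hw'.intervalIntegrable a b, ((hw'.pow 2).intervalIntegrable 0 1),
    fun x => ?_⟩
  have := integral_eq_sub_of_hasDerivAt (fun t _ => hd t)
    (hw'.intervalIntegrable 0 x)
  linarith

/-- If `(u,E) ∈ H¹_per × ℝ` satisfies `a_R(u,v) = E ∫₀¹ u v` for all `v ∈ H¹_per`, then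
for every `k ∈ ℤ`, `(4π²k² − E)·û(k) = z1 u(0) + z2 u(R) e^{−2πikR}` (eq. (cka2)). -/
theorem fourier_coefficient_equation (z1 z2 R : ℝ) (hz1 : 0 < z1) (hz2 : 0 < z2)
    (hR : R ∈ Set.Ioo (0 : ℝ) 1) (u u' : ℝ → ℝ) (E : ℝ) (hu : IsH1per u u')
    (huE : ∀ v v' : ℝ → ℝ, IsH1per v v' →
      aR z1 z2 R u u' v v' = E * ∫ x in (0:ℝ)..1, u x * v x) :
    ∀ k : ℤ, (4 * (π:ℂ) ^ 2 * (k:ℂ) ^ 2 - (E:ℂ)) * fc u k =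
      (z1:ℂ) * (u 0 : ℂ) + (z2:ℂ) * (u R : ℂ) * Complex.exp (-(2 * (π:ℂ) * Complex.I * (k:ℂ) * (R:ℂ))) := by
  intro k
  set ω : ℝ := 2 * π * (k : ℝ) with hω
  have hucont : Continuous u := hu.1
  -- basic derivative facts
  have hlin : ∀ x : ℝ, HasDerivAt (fun y : ℝ => ω * y) ω x := by
    intro x
    simpa using (hasDerivAt_id x).const_mul ω
  have hdc : ∀ x : ℝ, HasDerivAt (fun y => Real.cos (ω * y)) (-ω * Real.sin (ω * x)) x := by
    intro x
    have := (hlin x).cos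
    convert this using 1; ring
  have hds : ∀ x : ℝ, HasDerivAt (fun y => Real.sin (ω * y)) (ω * Real.cos (ω * x)) x := by
    intro x
    have := (hlin x).sin
    convert this using 1; ring
  have hshift : ∀ x : ℝ, ω * (x + 1) = ω * x + (k : ℤ) * (2 * π) := by
    intro x; rw [hω]; push_cast; ring
  have hcper : ∀ x : ℝ, Real.cos (ω * (x + 1)) = Real.cos (ω * x) := by
    intro x; rw [hshift x, Real.cos_add_int_mul_two_pi]
  have hsper : ∀ x : ℝ, Real.sin (ω * (x + 1)) = Real.sin (ω * x) := by
    intro x; rw [hshift x, Real.sin_add_int_mul_two_pi]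
  have hsin1 : Real.sin (ω * 1) = 0 := by
    have := hsper 0
    simpa using this
  have hcos1 : Real.cos (ω * 1) = 1 := by
    have := hcper 0
    simpa using this
  have hccont : Continuous fun x : ℝ => Real.cos (ω * x) :=
    Real.continuous_cos.comp (continuous_const.mul continuous_id)
  have hscont : Continuous fun x : ℝ => Real.sin (ω * x) :=
    Real.continuous_sin.comp (continuous_const.mul continuous_id)
  -- IsH1per for the test functions
  have hcH : IsH1per (fun x => Real.cos (ω * x)) (fun x => -ω * Real.sin (ω * x)) :=
    isH1per_of_deriv _ _ hdc (continuous_const.mul hscont) hcper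
      (fun x => by show -ω * Real.sin (ω * (x + 1)) = -ω * Real.sin (ω * x); rw [hsper])
  have hsH : IsH1per (fun x => Real.sin (ω * x)) (fun x => ω * Real.cos (ω * x)) :=
    isH1per_of_deriv _ _ hds (continuous_const.mul hccont) hsper
      (fun x => by show ω * Real.cos (ω * (x + 1)) = ω * Real.cos (ω * x); rw [hcper])
  -- integration by parts: ∫ u' c' = ω² ∫ u c  and  ∫ u' s' = ω² ∫ u s
  have hpc : ∫ x in (0:ℝ)..1, u' x * (-ω * Real.sin (ω * x))
      = ω ^ 2 * ∫ x in (0:ℝ)..1, u x * Real.cos (ω * x) := by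
    have hd2 : ∀ x : ℝ, HasDerivAt (fun y => -ω * Real.sin (ω * y))
        (-ω * (ω * Real.cos (ω * x))) x := fun x => (hds x).const_mul (-ω)
    have hp := parts_per u u' _ _ hu hd2 (continuous_const.mul (continuous_const.mul hccont))
      (by show -ω * Real.sin (ω * 1) = -ω * Real.sin (ω * 0); rw [hsin1]; simp)
    rw [hp, ← intervalIntegral.integral_neg, ← intervalIntegral.integral_const_mul]
    apply intervalIntegral.integral_congr
    intro x _
    dsimp only
    ring
  have hps : ∫ x in (0:ℝ)..1, u' x * (ω * Real.cos (ω * x))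
      = ω ^ 2 * ∫ x in (0:ℝ)..1, u x * Real.sin (ω * x) := by
    have hd2 : ∀ x : ℝ, HasDerivAt (fun y => ω * Real.cos (ω * y))
        (ω * (-ω * Real.sin (ω * x))) x := fun x => (hdc x).const_mul ω
    have hp := parts_per u u' _ _ hu hd2 (continuous_const.mul (continuous_const.mul hscont))
      (by show ω * Real.cos (ω * 1) = ω * Real.cos (ω * 0); rw [hcos1]; simp)
    rw [hp, ← intervalIntegral.integral_neg, ← intervalIntegral.integral_const_mul]
    apply intervalIntegral.integral_congr
    intro x _
    dsimp only
    ring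
  -- the two variational equations
  have e1 := huE _ _ hcH
  have e2 := huE _ _ hsH
  unfold aR at e1 e2
  rw [hpc] at e1
  rw [hps] at e2
  simp only [mul_zero, Real.cos_zero, Real.sin_zero, mul_one] at e1 e2
  set Ic : ℝ := ∫ x in (0:ℝ)..1, u x * Real.cos (ω * x) with hIc
  set Is : ℝ := ∫ x in (0:ℝ)..1, u x * Real.sin (ω * x) with hIs
  have eq1 : (ω ^ 2 - E) * Ic = z1 * u 0 + z2 * u R * Real.cos (ω * R) := by
    linear_combination e1
  have eq2 : (ω ^ 2 - E) * Is = z2 * u R * Real.sin (ω * R) := by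
    linear_combination e2
  -- the complex exponential in terms of cos and sin
  have hexp : ∀ x : ℝ, Complex.exp (-(2 * (π:ℂ) * Complex.I * (k:ℂ) * (x:ℂ)))
      = ((Real.cos (ω * x) : ℝ) : ℂ) - ((Real.sin (ω * x) : ℝ) : ℂ) * Complex.I := by
    intro x
    rw [show -(2 * (π:ℂ) * Complex.I * (k:ℂ) * (x:ℂ)) = ((-(ω * x) : ℝ) : ℂ) * Complex.I by
      rw [hω]; push_cast; ring]
    rw [Complex.exp_mul_I, Complex.ofReal_neg, Complex.cos_neg, Complex.sin_neg,
      ← Complex.ofReal_cos, ← Complex.ofReal_sin]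
    ring
  -- fc in terms of Ic and Is
  have hfc : fc u k = (Ic : ℂ) - (Is : ℂ) * Complex.I := by
    unfold fc
    have : (fun x : ℝ => (u x : ℂ) * Complex.exp (-(2 * (π:ℂ) * Complex.I * (k:ℂ) * (x:ℂ))))
        = fun x : ℝ => ((u x * Real.cos (ω * x) : ℝ) : ℂ)
          - ((u x * Real.sin (ω * x) : ℝ) : ℂ) * Complex.I := by
      ext x
      rw [hexp x]; push_cast; ring
    rw [this, intervalIntegral.integral_sub, intervalIntegral.integral_mul_const,
      intervalIntegral.integral_ofReal, intervalIntegral.integral_ofReal]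
    · exact (Complex.continuous_ofReal.comp (hucont.mul hccont)).intervalIntegrable 0 1
    · exact ((Complex.continuous_ofReal.comp (hucont.mul hscont)).mul
        continuous_const).intervalIntegrable 0 1
  rw [hfc, hexp R]
  have eq1c : ((ω ^ 2 - E) * Ic : ℝ) = ((z1 * u 0 + z2 * u R * Real.cos (ω * R) : ℝ)) := eq1
  have eq2c : ((ω ^ 2 - E) * Is : ℝ) = ((z2 * u R * Real.sin (ω * R) : ℝ)) := eq2
  have e1C := congrArg (Complex.ofReal) eq1c
  have e2C := congrArg (Complex.ofReal) eq2c
  rw [hω] at e1C e2C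
  push_cast at e1C e2C
  push_cast [hω]
  linear_combination e1C - Complex.I * e2C

end
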